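/- Let Γ be a finite additive abelian group that can be generated by two elements, and let S be a multiset of elements of Γ of cardinality 3 such that u+u ∉ S for every u ∈ Γ. Let A_S be the Cayley sum adjacency matrix, and assume −3 is not an eigenvalue of A_S. Then there exists a multiset L of nonnegative real numbers such that the multiset of eigenvalues of A_S equals {3,−1,−1,−1} + L + (−L). -/

import Mathlib

set_option linter.unusedSectionVars false
set_option maxHeartbeats 1000000

open Polynomial Complex

namespace FowlerAux

variable {Γ : Type*} [AddCommGroup Γ] [Fintype Γ] [DecidableEq Γ]

noncomputable def cS (S : Multiset Γ) (χ : AddChar Γ ℂ) : ℂ := (S.map χ).sum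

noncomputable def sgn (χ : AddChar Γ ℂ) : ℝ :=
  if (Fintype.equivFin (AddChar Γ ℂ) χ : ℕ) < (Fintype.equivFin (AddChar Γ ℂ) (-χ) : ℕ)
  then 1 else -1

lemma sgn_sq (χ : AddChar Γ ℂ) : sgn χ * sgn χ = 1 := by
  unfold sgn; split <;> norm_num

lemma sgn_neg {χ : AddChar Γ ℂ} (h : ¬ (-χ = χ)) : sgn (-χ) = - sgn χ := by
  have hne : (Fintype.equivFin (AddChar Γ ℂ) χ : ℕ) ≠
      (Fintype.equivFin (AddChar Γ ℂ) (-χ) : ℕ) := by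
    intro he
    exact h ((Fintype.equivFin (AddChar Γ ℂ)).injective (Fin.val_injective he)).symm
  simp only [sgn, neg_neg]
  rcases lt_or_gt_of_ne hne with hlt | hgt
  · rw [if_neg (by omega), if_pos hlt]
  · rw [if_pos hgt, if_neg (by omega)]; norm_num

noncomputable def rho (S : Multiset Γ) (χ : AddChar Γ ℂ) : ℝ :=
  if -χ = χ then (cS S χ).re else sgn χ * ‖cS S χ‖

lemma cS_neg (S : Multiset Γ) (χ : AddChar Γ ℂ) :
    cS S (-χ) = (starRingEnd ℂ) (cS S χ) := by
  rw [cS, cS, map_multiset_sum, Multiset.map_map]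
  exact congrArg Multiset.sum (Multiset.map_congr rfl fun s _ => by
    simp [AddChar.map_neg_eq_conj])

lemma rho_coe {S : Multiset Γ} {χ : AddChar Γ ℂ} (h : -χ = χ) :
    ((rho S χ : ℝ) : ℂ) = cS S χ := by
  have hc : (starRingEnd ℂ) (cS S χ) = cS S χ := by rw [← cS_neg, h]
  rw [rho, if_pos h]
  exact Complex.conj_eq_iff_re.mp hc

lemma rho_neg {S : Multiset Γ} {χ : AddChar Γ ℂ} (h : ¬ (-χ = χ)) :
    rho S (-χ) = - rho S χ := by
  have h2 : ¬ (-(-χ) = -χ) := fun he => h (by rw [neg_neg] at he; exact he ▸ (neg_neg χ) ▸ rfl)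
  rw [rho, rho, if_neg h2, if_neg h, sgn_neg h, cS_neg, Complex.norm_conj]
  ring


lemma sum_count_mul (S : Multiset Γ) (χ : AddChar Γ ℂ) :
    ∑ w : Γ, (S.count w : ℂ) * χ w = cS S χ := by
  rw [cS, Finset.sum_multiset_map_count]
  rw [← Finset.sum_subset (Finset.subset_univ S.toFinset)]
  · simp [nsmul_eq_mul]
  · intro x _ hx
    simp [Multiset.count_eq_zero_of_notMem (fun h => hx (Multiset.mem_toFinset.2 h))]

lemma mulVec_char (S : Multiset Γ) (χ : AddChar Γ ℂ) :
    (Matrix.of fun u v : Γ => (S.count (u + v) : ℂ)).mulVec ⇑χ = cS S χ • ⇑(-χ) := by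
  funext u
  have h1 := Fintype.sum_equiv (Equiv.addLeft (-u))
    (fun w => (S.count w : ℂ) * (χ (-u) * χ w))
    (fun v => (S.count (u + v) : ℂ) * χ v)
    (fun w => by simp [← AddChar.map_add_eq_mul, add_neg_cancel_left])
  show ∑ v : Γ, (S.count (u + v) : ℂ) * χ v = _
  rw [← h1]
  simp only [Pi.smul_apply, AddChar.neg_apply, smul_eq_mul]
  rw [Finset.sum_congr rfl (fun x _ => by ring :
      ∀ x ∈ Finset.univ, (S.count x : ℂ) * (χ (-u) * χ x) = χ (-u) * ((S.count x : ℂ) * χ x)),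
    ← Finset.mul_sum, sum_count_mul, mul_comm]

noncomputable def wv (S : Multiset Γ) (χ : AddChar Γ ℂ) : Γ → ℂ :=
  if -χ = χ ∨ cS S χ = 0 then ⇑χ
  else ((rho S χ : ℝ) : ℂ) • ⇑χ + cS S χ • ⇑(-χ)

lemma rho_sq {S : Multiset Γ} (χ : AddChar Γ ℂ) (h : ¬ (-χ = χ)) :
    ((rho S χ : ℝ) : ℂ) ^ 2 = cS S χ * (starRingEnd ℂ) (cS S χ) := by
  rw [rho, if_neg h, Complex.mul_conj']
  push_cast
  rw [mul_pow]
  norm_cast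
  rw [sq (sgn χ), sgn_sq, one_mul, Complex.sq_norm, Complex.normSq_eq_norm_sq]

lemma mulVec_wv (S : Multiset Γ) (χ : AddChar Γ ℂ) :
    (Matrix.of fun u v : Γ => (S.count (u + v) : ℂ)).mulVec (wv S χ)
      = ((rho S χ : ℝ) : ℂ) • wv S χ := by
  by_cases h : -χ = χ ∨ cS S χ = 0
  · rw [wv, if_pos h, mulVec_char]
    rcases h with h | h
    · rw [h, rho_coe h]
    · have hr : rho S χ = 0 := by
        rw [rho]; split <;> simp [h]
      rw [h, hr]; simp
  · push_neg at h
    obtain ⟨hfix, hc⟩ := h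
    have hfix' : ¬ (-(-χ) = -χ) := fun he => hfix (by rw [neg_neg] at he; exact he.symm)
    rw [wv, if_neg (by push_neg; exact ⟨hfix, hc⟩), Matrix.mulVec_add, Matrix.mulVec_smul,
      Matrix.mulVec_smul, mulVec_char, mulVec_char, cS_neg, neg_neg]
    have hsq := rho_sq (S := S) χ hfix
    funext u
    simp only [Pi.add_apply, Pi.smul_apply, smul_eq_mul]
    linear_combination (-(χ u)) * hsq


lemma span_wv (S : Multiset Γ) : ⊤ ≤ Submodule.span ℂ (Set.range (wv S)) := by
  have h1 : ∀ χ : AddChar Γ ℂ, ⇑χ ∈ Submodule.span ℂ (Set.range (wv S)) := by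
    intro χ
    by_cases hif : -χ = χ ∨ cS S χ = 0
    · have : ⇑χ = wv S χ := by rw [wv, if_pos hif]
      rw [this]
      exact Submodule.subset_span ⟨χ, rfl⟩
    · push_neg at hif
      obtain ⟨hfix, hc⟩ := hif
      have hfix' : ¬ (-(-χ) = -χ) := fun he => hfix (by rw [neg_neg] at he; exact he.symm)
      set m : ℝ := ‖cS S χ‖ with hm
      have hmpos : 0 < m := norm_pos_iff.mpr hc
      have hsq := rho_sq (S := S) χ hfix
      have hcc : cS S χ * (starRingEnd ℂ) (cS S χ) = ((m : ℂ)) ^ 2 := by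
        rw [Complex.mul_conj, ← Complex.sq_norm]
        push_cast
        ring
      have hkey : ((rho S χ : ℝ) : ℂ) • wv S χ + cS S χ • wv S (-χ)
          = (((2 * m ^ 2 : ℝ)) : ℂ) • ⇑χ := by
        rw [wv, if_neg (by push_neg; exact ⟨hfix, hc⟩),
          wv, if_neg (by push_neg; exact ⟨hfix', by rw [cS_neg]; simpa using hc⟩),
          rho_neg hfix, cS_neg, neg_neg]
        funext u
        simp only [Pi.add_apply, Pi.smul_apply, smul_eq_mul, AddChar.neg_apply]
        push_cast
        linear_combination (χ u) * hsq + 2 * (χ u) * hcc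
      have h2m : (((2 * m ^ 2 : ℝ)) : ℂ) ≠ 0 := by
        rw [Complex.ofReal_ne_zero]
        positivity
      have : ⇑χ = (((2 * m ^ 2 : ℝ)) : ℂ)⁻¹ •
          (((rho S χ : ℝ) : ℂ) • wv S χ + cS S χ • wv S (-χ)) := by
        rw [hkey, smul_smul, inv_mul_cancel₀ h2m, one_smul]
      rw [this]
      exact Submodule.smul_mem _ _ (Submodule.add_mem _
        (Submodule.smul_mem _ _ (Submodule.subset_span ⟨χ, rfl⟩))
        (Submodule.smul_mem _ _ (Submodule.subset_span ⟨-χ, rfl⟩)))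
  intro x _
  have hx : x ∈ Submodule.span ℂ (Set.range ((⇑) : AddChar Γ ℂ → Γ → ℂ)) := by
    have := Module.Basis.mem_span (AddChar.complexBasis Γ) x
    rwa [AddChar.coe_complexBasis] at this
  refine Submodule.span_le.mpr ?_ hx
  rintro _ ⟨χ, rfl⟩
  exact h1 χ

lemma card_addChar_finrank :
    Fintype.card (AddChar Γ ℂ) = Module.finrank ℂ (Γ → ℂ) := by
  rw [AddChar.card_eq, Module.finrank_fintype_fun_eq_card]

lemma charpoly_eq (S : Multiset Γ) :
    (Matrix.of fun u v : Γ => (S.count (u + v) : ℝ)).charpoly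
      = ∏ χ : AddChar Γ ℂ, (X - C (rho S χ)) := by
  set Ac : Matrix Γ Γ ℂ := Matrix.of fun u v : Γ => (S.count (u + v) : ℂ) with hAc
  apply Polynomial.map_injective (algebraMap ℝ ℂ) (algebraMap ℝ ℂ).injective
  have hmap : (Matrix.of fun u v : Γ => (S.count (u + v) : ℝ)).map (algebraMap ℝ ℂ) = Ac := by
    ext u v
    simp [Ac]
  rw [← Matrix.charpoly_map _ (algebraMap ℝ ℂ), hmap]
  have hprod : (∏ χ : AddChar Γ ℂ, (X - C (rho S χ))).map (algebraMap ℝ ℂ)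
      = ∏ χ : AddChar Γ ℂ, (X - C (((rho S χ : ℝ)) : ℂ)) := by
    rw [← Polynomial.coe_mapRingHom, map_prod]
    refine Finset.prod_congr rfl fun χ _ => ?_
    simp
  rw [hprod]
  -- now compute Ac.charpoly
  let bw : Module.Basis (AddChar Γ ℂ) ℂ (Γ → ℂ) :=
    basisOfTopLeSpanOfCardEqFinrank (wv S) (span_wv S) card_addChar_finrank
  have hbw : ∀ φ, bw φ = wv S φ := fun φ => by
    rw [show bw = _ from rfl, coe_basisOfTopLeSpanOfCardEqFinrank]
  have h1 : Ac.charpoly = (Matrix.toLin' Ac).charpoly := by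
    rw [← LinearMap.charpoly_toMatrix (Matrix.toLin' Ac) (Pi.basisFun ℂ Γ),
      LinearMap.toMatrix_eq_toMatrix', LinearMap.toMatrix'_toLin']
  have h2 : LinearMap.toMatrix bw bw (Matrix.toLin' Ac)
      = Matrix.diagonal (fun χ => ((rho S χ : ℝ) : ℂ)) := by
    ext χ ψ
    rw [LinearMap.toMatrix_apply, Matrix.toLin'_apply, hbw ψ, mulVec_wv, ← hbw ψ,
      map_smul, Module.Basis.repr_self]
    by_cases hij : χ = ψ
    · subst hij
      simp
    · rw [Matrix.diagonal_apply_ne _ hij]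
      simp [Finsupp.single_apply, Ne.symm hij]
  have h3 : (Matrix.diagonal (fun χ => ((rho S χ : ℝ) : ℂ))).charpoly
      = ∏ χ : AddChar Γ ℂ, (X - C (((rho S χ : ℝ)) : ℂ)) := by
    rw [Matrix.charpoly]
    have hcm : (Matrix.diagonal (fun χ => ((rho S χ : ℝ) : ℂ))).charmatrix
        = Matrix.diagonal (fun χ => (X : ℂ[X]) - C (((rho S χ : ℝ)) : ℂ)) := by
      ext i j
      by_cases hij : i = j
      · subst hij
        rw [Matrix.charmatrix_apply_eq, Matrix.diagonal_apply_eq, Matrix.diagonal_apply_eq]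
      · rw [Matrix.charmatrix_apply_ne _ _ _ hij, Matrix.diagonal_apply_ne _ hij,
          Matrix.diagonal_apply_ne _ hij, map_zero, neg_zero]
    rw [hcm, Matrix.det_diagonal]
  rw [h1, ← LinearMap.charpoly_toMatrix (Matrix.toLin' Ac) bw, h2, h3]

lemma roots_eq (S : Multiset Γ) :
    (Matrix.of fun u v : Γ => (S.count (u + v) : ℝ)).charpoly.roots
      = Finset.univ.val.map (rho S) := by
  rw [charpoly_eq, Finset.prod_eq_multiset_prod,
    show Multiset.map (fun χ => X - C (rho S χ)) Finset.univ.val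
      = Multiset.map (fun a => X - C a) (Multiset.map (rho S) Finset.univ.val) from
      (Multiset.map_map (fun a : ℝ => X - C a) (rho S) Finset.univ.val).symm]
  exact Polynomial.roots_multiset_prod_X_sub_C _


lemma apply_pm_one {χ : AddChar Γ ℂ} (h : -χ = χ) (a : Γ) : χ a = 1 ∨ χ a = -1 := by
  have h1 : χ a * χ a = 1 := by
    conv_lhs => rw [show χ a * χ a = χ a * χ (-a) from by
      rw [← AddChar.neg_apply, h]]
    rw [← AddChar.map_add_eq_mul, add_neg_cancel, AddChar.map_zero_eq_one]
  exact mul_self_eq_one_iff.mp h1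

lemma sgn_pm (χ : AddChar Γ ℂ) : sgn χ = 1 ∨ sgn χ = -1 := by
  unfold sgn; split
  · exact Or.inl rfl
  · exact Or.inr rfl

lemma exists_two_torsion {s : Γ} (hs : ∀ u : Γ, ¬ u + u = s) :
    ∃ χ0 : AddChar Γ ℂ, -χ0 = χ0 ∧ χ0 s ≠ 1 := by
  classical
  let D : Γ →+ Γ := AddMonoidHom.mk' (fun u => u + u) (fun a b => by rw [add_add_add_comm])
  let π := QuotientAddGroup.mk' D.range
  have hs' : π s ≠ 0 := by
    rw [Ne, QuotientAddGroup.mk'_apply, QuotientAddGroup.eq_zero_iff]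
    rintro ⟨u, hu⟩
    exact hs u hu
  obtain ⟨ψ, hψ⟩ := AddChar.exists_apply_ne_zero.mpr hs'
  refine ⟨ψ.compAddMonoidHom π, ?_, by simpa using hψ⟩
  have hsq : ∀ a : Γ, (ψ.compAddMonoidHom π) a * (ψ.compAddMonoidHom π) a = 1 := by
    intro a
    rw [← AddChar.map_add_eq_mul]
    show ψ (π (a + a)) = 1
    have : π (a + a) = 0 := by
      rw [QuotientAddGroup.mk'_apply, QuotientAddGroup.eq_zero_iff]
      exact ⟨a, rfl⟩
    rw [this, AddChar.map_zero_eq_one]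
  ext a
  rw [AddChar.neg_apply', inv_eq_of_mul_eq_one_right (hsq a)]

lemma sum_H {s : Γ} (hs : ∀ u : Γ, ¬ u + u = s) :
    ∑ χ ∈ Finset.univ.filter (fun χ : AddChar Γ ℂ => -χ = χ), χ s = 0 := by
  classical
  obtain ⟨χ0, hχ0, hχ0s⟩ := exists_two_torsion hs
  set H := Finset.univ.filter (fun χ : AddChar Γ ℂ => -χ = χ) with hH
  have hmem : ∀ χ : AddChar Γ ℂ, χ ∈ H ↔ -χ = χ := by
    intro χ; simp [hH]
  have hstep : ∑ χ ∈ H, (χ0 + χ) s = ∑ χ ∈ H, χ s := by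
    refine Finset.sum_equiv (Equiv.addLeft χ0) ?_ ?_
    · intro χ
      rw [hmem, hmem]
      constructor
      · intro h
        show -(χ0 + χ) = χ0 + χ
        rw [neg_add, hχ0, h]
      · intro h
        have : -(χ0 + χ) = χ0 + χ := h
        rw [neg_add, hχ0] at this
        exact add_left_cancel this
    · intro χ _
      rfl
  have hdist : ∑ χ ∈ H, (χ0 + χ) s = χ0 s * ∑ χ ∈ H, χ s := by
    rw [Finset.mul_sum]
    exact Finset.sum_congr rfl fun χ _ => by rw [AddChar.add_apply]
  have : (χ0 s - 1) * ∑ χ ∈ H, χ s = 0 := by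
    rw [sub_mul, one_mul, ← hdist, hstep, sub_self]
  rcases mul_eq_zero.mp this with h | h
  · exact absurd (by linear_combination h) hχ0s
  · exact h

lemma card_H_le (hgen : ∃ a b : Γ, AddSubgroup.closure {a, b} = ⊤) :
    (Finset.univ.filter (fun χ : AddChar Γ ℂ => -χ = χ)).card ≤ 4 := by
  classical
  obtain ⟨a, b, hab⟩ := hgen
  have hinj : Set.InjOn (fun χ : AddChar Γ ℂ => (χ a, χ b))
      (Finset.univ.filter (fun χ : AddChar Γ ℂ => -χ = χ)) := by
    intro χ hχ ψ hψ h
    obtain ⟨ha, hb⟩ := Prod.ext_iff.mp h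
    let K : AddSubgroup Γ :=
      { carrier := {x | χ x = ψ x}
        zero_mem' := by simp
        add_mem' := fun hx hy => by
          simp only [Set.mem_setOf_eq, AddChar.map_add_eq_mul] at *
          rw [hx, hy]
        neg_mem' := fun hx => by
          simp only [Set.mem_setOf_eq, AddChar.map_neg_eq_inv] at *
          rw [hx] }
    have hle : AddSubgroup.closure {a, b} ≤ K := by
      rw [AddSubgroup.closure_le]
      rintro x (rfl | rfl)
      · exact ha
      · exact hb
    rw [hab] at hle
    refine AddChar.ext _ _ fun x => ?_
    exact hle (AddSubgroup.mem_top x)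
  have hsub : ((Finset.univ.filter (fun χ : AddChar Γ ℂ => -χ = χ)) : Finset (AddChar Γ ℂ)).image
      (fun χ => (χ a, χ b)) ⊆ ({1, -1} : Finset ℂ) ×ˢ ({1, -1} : Finset ℂ) := by
    intro p hp
    rw [Finset.mem_image] at hp
    obtain ⟨χ, hχ, rfl⟩ := hp
    rw [Finset.mem_filter] at hχ
    rw [Finset.mem_product]
    constructor <;> · simp only [Finset.mem_insert, Finset.mem_singleton]
                      first
                        | exact apply_pm_one hχ.2 a
                        | exact apply_pm_one hχ.2 b
  calc (Finset.univ.filter (fun χ : AddChar Γ ℂ => -χ = χ)).card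
      = ((Finset.univ.filter (fun χ : AddChar Γ ℂ => -χ = χ)).image
          (fun χ => (χ a, χ b))).card := (Finset.card_image_of_injOn hinj).symm
    _ ≤ (({1, -1} : Finset ℂ) ×ˢ ({1, -1} : Finset ℂ)).card := Finset.card_le_card hsub
    _ ≤ 4 := by
        rw [Finset.card_product]
        have : ({1, -1} : Finset ℂ).card ≤ 2 := Finset.card_insert_le _ _ |>.trans (by simp)
        nlinarith


end FowlerAux

open FowlerAux

/-- algebraic core of Fowler's conjecture: Let `Γ` be a finite additive
abelian group generated by two elements and `S` a multiset of elements of `Γ` with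
`|S| = 3` such that `u + u ∉ S` for all `u` (no semiedges).  If `−3` is not an
eigenvalue of the real Cayley sum adjacency matrix `A_S(u,v) = m_S(u+v)`, then there is
a multiset `L` of nonnegative reals such that the multiset of eigenvalues of `A_S`
equals `{3,−1,−1,−1} + L + (−L)`. -/
theorem fowler_conjecture_cayley_sum
    {Γ : Type*} [AddCommGroup Γ] [Fintype Γ] [DecidableEq Γ]
    (hgen : ∃ a b : Γ, AddSubgroup.closure {a, b} = ⊤)
    (S : Multiset Γ) (hS : Multiset.card S = 3)
    (hsemi : ∀ u : Γ, u + u ∉ S)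
    (hev : ¬ (Matrix.charpoly
        (Matrix.of fun u v : Γ => (S.count (u + v) : ℝ))).IsRoot (-3)) :
    ∃ L : Multiset ℝ, (∀ x ∈ L, 0 ≤ x) ∧
      (Matrix.charpoly (Matrix.of fun u v : Γ => (S.count (u + v) : ℝ))).roots
        = ({3, -1, -1, -1} : Multiset ℝ) + L + L.map (fun x => -x) := by
  obtain ⟨s1, s2, s3, rfl⟩ := Multiset.card_eq_three.mp hS
  set S : Multiset Γ := {s1, s2, s3} with hSdef
  have hroots := roots_eq (Γ := Γ) S
  have hs1 : ∀ u : Γ, ¬ u + u = s1 := fun u h => hsemi u (by rw [h]; simp [hSdef])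
  have hs2 : ∀ u : Γ, ¬ u + u = s2 := fun u h => hsemi u (by rw [h]; simp [hSdef])
  have hs3 : ∀ u : Γ, ¬ u + u = s3 := fun u h => hsemi u (by rw [h]; simp [hSdef])
  have hcS : ∀ χ : AddChar Γ ℂ, cS S χ = χ s1 + χ s2 + χ s3 := by
    intro χ
    simp [cS, hSdef]
    ring
  have hno3 : ∀ χ : AddChar Γ ℂ, rho S χ ≠ -3 := by
    intro χ hχ
    apply hev
    have hmem : (-3 : ℝ) ∈ (Matrix.charpoly
        (Matrix.of fun u v : Γ => (S.count (u + v) : ℝ))).roots := by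
      rw [hroots]
      exact Multiset.mem_map.mpr ⟨χ, Finset.mem_val.mpr (Finset.mem_univ χ), hχ⟩
    exact (Polynomial.mem_roots'.mp hmem).2
  set H : Finset (AddChar Γ ℂ) := Finset.univ.filter (fun χ : AddChar Γ ℂ => -χ = χ) with hHdef
  have hHval : ∀ χ ∈ H, rho S χ = 3 ∨ rho S χ = 1 ∨ rho S χ = -1 ∨ rho S χ = -3 := by
    intro χ hχ
    have hfix := (Finset.mem_filter.mp hχ).2
    have h1 := rho_coe (S := S) hfix
    rw [hcS] at h1
    rcases apply_pm_one hfix s1 with e1 | e1 <;>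
    rcases apply_pm_one hfix s2 with e2 | e2 <;>
    rcases apply_pm_one hfix s3 with e3 | e3 <;>
    rw [e1, e2, e3] at h1 <;> norm_num at h1 <;>
    first
      | (exact Or.inl (by exact_mod_cast h1))
      | (exact Or.inr (Or.inl (by exact_mod_cast h1)))
      | (exact Or.inr (Or.inr (Or.inl (by exact_mod_cast h1))))
      | (exact Or.inr (Or.inr (Or.inr (by exact_mod_cast h1))))
  have hsumC : ∑ χ ∈ H, ((rho S χ : ℝ) : ℂ) = 0 := by
    rw [Finset.sum_congr rfl (fun χ hχ => rho_coe (S := S) (Finset.mem_filter.mp hχ).2)]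
    rw [Finset.sum_congr rfl (fun χ _ => hcS χ), Finset.sum_add_distrib, Finset.sum_add_distrib,
      sum_H hs1, sum_H hs2, sum_H hs3]
    ring
  have hsumR : ∑ χ ∈ H, rho S χ = 0 := by
    have h2 : ((∑ χ ∈ H, rho S χ : ℝ) : ℂ) = 0 := by push_cast; exact hsumC
    exact_mod_cast h2
  have h0 : (0 : AddChar Γ ℂ) ∈ H := Finset.mem_filter.mpr ⟨Finset.mem_univ _, neg_zero⟩
  have hrho0 : rho S 0 = 3 := by
    have h1 := rho_coe (S := S) (neg_zero : -(0 : AddChar Γ ℂ) = 0)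
    rw [hcS] at h1
    simp only [AddChar.zero_apply] at h1
    norm_num at h1
    exact_mod_cast h1
  set H' : Finset (AddChar Γ ℂ) := H.erase 0 with hH'def
  have hcard4 : H.card ≤ 4 := by
    rw [hHdef]
    exact card_H_le hgen
  have hcard' : H'.card ≤ 3 := by
    rw [hH'def, Finset.card_erase_of_mem h0]
    omega
  have hsum' : ∑ χ ∈ H', rho S χ = -3 := by
    have h2 := Finset.add_sum_erase H (rho S) h0
    rw [hrho0, hsumR] at h2
    linarith
  have hvalH' : ∀ χ ∈ H', rho S χ = 3 ∨ rho S χ = 1 ∨ rho S χ = -1 := by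
    intro χ hχ
    rcases hHval χ (Finset.mem_of_mem_erase hχ) with h | h | h | h
    · exact Or.inl h
    · exact Or.inr (Or.inl h)
    · exact Or.inr (Or.inr h)
    · exact absurd h (hno3 χ)
  have hlow : ∀ χ ∈ H', (-1 : ℝ) ≤ rho S χ := by
    intro χ hχ
    rcases hvalH' χ hχ with h | h | h <;> rw [h] <;> norm_num
  have hcard3 : H'.card = 3 := by
    have h2 := Finset.card_nsmul_le_sum H' (rho S) (-1) hlow
    rw [hsum'] at h2
    have h3 : (H'.card : ℝ) * (-1) ≤ -3 := by
      calc (H'.card : ℝ) * (-1) = H'.card • (-1 : ℝ) := by rw [nsmul_eq_mul]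
      _ ≤ -3 := h2
    have h4 : (3 : ℝ) ≤ H'.card := by linarith
    have h5 : 3 ≤ H'.card := by exact_mod_cast h4
    omega
  have heach : ∀ χ ∈ H', rho S χ = -1 := by
    by_contra hcon
    push_neg at hcon
    obtain ⟨φ, hφ, hφne⟩ := hcon
    have hφge : (1 : ℝ) ≤ rho S φ := by
      rcases hvalH' φ hφ with h | h | h
      · rw [h]; norm_num
      · rw [h]
      · exact absurd h hφne
    have hrest := Finset.card_nsmul_le_sum (H'.erase φ) (rho S) (-1)
      (fun χ hχ => hlow χ (Finset.mem_of_mem_erase hχ))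
    rw [Finset.card_erase_of_mem hφ, hcard3] at hrest
    have h2 := Finset.add_sum_erase H' (rho S) hφ
    rw [hsum'] at h2
    have h3 : ((3 - 1 : ℕ) : ℝ) * (-1) ≤ ∑ χ ∈ H'.erase φ, rho S χ := by
      calc ((3 - 1 : ℕ) : ℝ) * (-1) = (3 - 1 : ℕ) • (-1 : ℝ) := by rw [nsmul_eq_mul]
      _ ≤ _ := hrest
    norm_num at h3
    linarith
  have hHmap : H.val.map (rho S) = ({3, -1, -1, -1} : Multiset ℝ) := by
    have hHins : H = insert 0 H' := (Finset.insert_erase h0).symm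
    have h0notin : (0 : AddChar Γ ℂ) ∉ H' := Finset.notMem_erase _ _
    rw [hHins, Finset.insert_val_of_notMem h0notin, Multiset.map_cons, hrho0]
    have hrepl : H'.val.map (rho S) = Multiset.replicate 3 (-1) := by
      refine Multiset.eq_replicate.mpr ⟨?_, ?_⟩
      · rw [Multiset.card_map]
        exact hcard3
      · intro b hb
        obtain ⟨χ, hχ, rfl⟩ := Multiset.mem_map.mp hb
        exact heach χ (Finset.mem_val.mp hχ)
    rw [hrepl]
    rfl
  set Pp : Finset (AddChar Γ ℂ) :=
    Finset.univ.filter (fun χ : AddChar Γ ℂ => ¬(-χ = χ) ∧ sgn χ = 1) with hPpdef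
  set Pm : Finset (AddChar Γ ℂ) :=
    Finset.univ.filter (fun χ : AddChar Γ ℂ => ¬(-χ = χ) ∧ ¬ sgn χ = 1) with hPmdef
  have hdisj1 : Disjoint H Pp := by
    rw [Finset.disjoint_left]
    intro χ hχ hχ'
    exact ((Finset.mem_filter.mp hχ').2).1 ((Finset.mem_filter.mp hχ).2)
  have hdisj2 : Disjoint (H.disjUnion Pp hdisj1) Pm := by
    rw [Finset.disjoint_left]
    intro χ hχ hχ'
    rw [Finset.mem_disjUnion] at hχ
    obtain ⟨hfix, hsgn⟩ := (Finset.mem_filter.mp hχ').2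
    rcases hχ with h | h
    · exact hfix (Finset.mem_filter.mp h).2
    · exact hsgn ((Finset.mem_filter.mp h).2).2
  have huniv : (Finset.univ : Finset (AddChar Γ ℂ))
      = (H.disjUnion Pp hdisj1).disjUnion Pm hdisj2 := by
    ext χ
    simp only [Finset.mem_univ, true_iff, Finset.mem_disjUnion, hHdef, hPpdef, hPmdef,
      Finset.mem_filter]
    tauto
  set L : Multiset ℝ := Pp.val.map (rho S) with hLdef
  have hL0 : ∀ x ∈ L, 0 ≤ x := by
    intro x hx
    obtain ⟨χ, hχ, rfl⟩ := Multiset.mem_map.mp hx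
    obtain ⟨hfix, hsgn⟩ := (Finset.mem_filter.mp (Finset.mem_val.mp hχ)).2
    rw [rho, if_neg hfix, hsgn, one_mul]
    exact norm_nonneg _
  have hPm : Pm = Pp.map ⟨fun χ => -χ, neg_injective⟩ := by
    ext ψ
    simp only [hPpdef, hPmdef, Finset.mem_map, Finset.mem_filter, Finset.mem_univ, true_and,
      Function.Embedding.coeFn_mk]
    constructor
    · rintro ⟨hfix, hsgn⟩
      refine ⟨-ψ, ⟨?_, ?_⟩, neg_neg ψ⟩
      · intro he
        rw [neg_neg] at he
        exact hfix he.symm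
      · rcases sgn_pm ψ with h | h
        · exact absurd h hsgn
        · rw [sgn_neg hfix, h]
          norm_num
    · rintro ⟨χ, ⟨hfix, hsgn⟩, rfl⟩
      constructor
      · intro he
        rw [neg_neg] at he
        exact hfix he.symm
      · rw [sgn_neg hfix, hsgn]
        norm_num
  have hPmmap : Pm.val.map (rho S) = L.map (fun x => -x) := by
    rw [hPm, Finset.map_val, Multiset.map_map, hLdef, Multiset.map_map]
    refine Multiset.map_congr rfl ?_
    intro χ hχ
    have hfix := ((Finset.mem_filter.mp (Finset.mem_val.mp hχ)).2).1
    show rho S (-χ) = - rho S χ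
    exact rho_neg hfix
  refine ⟨L, hL0, ?_⟩
  rw [hroots]
  have hval : (Finset.univ : Finset (AddChar Γ ℂ)).val = H.val + Pp.val + Pm.val := by
    rw [huniv]
    rfl
  rw [hval, Multiset.map_add, Multiset.map_add, hHmap, hPmmap]
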